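/- Suppose μ: X^k → X is a topological k-mean whose barycentric operator β is power convergent, and define μ̃(x) = x* where β^n(x) → (x*,...,x*). Then μ̃ is a (k+1)-mean satisfying μ̃ ∘ β = μ̃, and any continuous (k+1)-mean ν with ν ∘ β = ν equals μ̃. Moreover if μ is symmetric, so is μ̃. -/

import Mathlib

/-- A `k`-mean: idempotent on constant tuples. -/
def IsMean {X : Type*} {k : ℕ} (μ : (Fin k → X) → X) : Prop :=
  ∀ x : X, μ (fun _ => x) = x

/-- The barycentric operator. -/
def bary {X : Type*} {k : ℕ} (μ : (Fin k → X) → X) (x : Fin (k+1) → X) : Fin (k+1) → X :=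
  fun i => μ (fun j => x (i.succAbove j))

/-- A symmetric mean: invariant under permutations of its arguments. -/
def SymmetricMean {X : Type*} {k : ℕ} (μ : (Fin k → X) → X) : Prop :=
  ∀ (σ : Equiv.Perm (Fin k)) (x : Fin k → X), μ (x ∘ σ) = μ x

lemma bary_comp_perm {X : Type*} {k : ℕ} {μ : (Fin k → X) → X} (hs : SymmetricMean μ)
    (σ : Equiv.Perm (Fin (k+1))) (x : Fin (k+1) → X) :
    bary μ (x ∘ σ) = (bary μ x) ∘ σ := by
  funext i
  let τ : Equiv.Perm (Fin k) :=
    (finSuccAboveEquiv i).trans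
      ((σ.subtypeEquiv (fun a => not_congr (Iff.symm σ.apply_eq_iff_eq))).trans
        (finSuccAboveEquiv (σ i)).symm)
  have key : ∀ j : Fin k, (σ i).succAbove (τ j) = σ (i.succAbove j) := by
    intro j
    have h2 : ((finSuccAboveEquiv (σ i)) (τ j)).val = σ (i.succAbove j) := by
      simp [τ, Equiv.subtypeEquiv, finSuccAboveEquiv_apply]
    rwa [finSuccAboveEquiv_apply] at h2
  have : (fun j => (x ∘ σ) (i.succAbove j)) = (fun j => x ((σ i).succAbove j)) ∘ τ := by
    funext j
    simp [Function.comp, key j]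
  show μ (fun j => (x ∘ σ) (i.succAbove j)) = μ (fun j => x ((σ i).succAbove j))
  rw [this, hs τ]

theorem beta_limit_is_invariant_extension {X : Type*} [TopologicalSpace X] [T2Space X]
    {k : ℕ} (μ : (Fin k → X) → X) (hmean : IsMean μ) (hcont : Continuous μ)
    (ν : (Fin (k+1) → X) → X)
    (hlim : ∀ x : Fin (k+1) → X,
      Filter.Tendsto (fun n => (bary μ)^[n] x) Filter.atTop (nhds fun _ => ν x)) :
    IsMean ν ∧ (∀ x : Fin (k+1) → X, ν (bary μ x) = ν x) ∧
    (∀ ν' : (Fin (k+1) → X) → X, Continuous ν' → IsMean ν' →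
      (∀ x, ν' (bary μ x) = ν' x) → ν' = ν) ∧
    (SymmetricMean μ → SymmetricMean ν) := by
  have hfix : ∀ x : X, bary μ (fun _ => x) = (fun _ => x) := by
    intro x; funext i; exact hmean x
  refine ⟨?_, ?_, ?_, ?_⟩
  · intro x
    have h2 : ∀ n, (bary μ)^[n] (fun _ : Fin (k+1) => x) = (fun _ => x) :=
      fun n => Function.iterate_fixed (hfix x) n
    have h1 : Filter.Tendsto (fun _ : ℕ => (fun _ : Fin (k+1) => x))
        Filter.atTop (nhds fun _ => ν (fun _ => x)) := by
      simpa [h2] using hlim (fun _ => x)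
    have := tendsto_nhds_unique h1 tendsto_const_nhds
    exact congrFun this 0
  · intro x
    have h1 : Filter.Tendsto (fun n => (bary μ)^[n] (bary μ x))
        Filter.atTop (nhds fun _ => ν x) := by
      have := (hlim x).comp (Filter.tendsto_add_atTop_nat 1)
      simpa [Function.comp_def, Function.iterate_succ_apply] using this
    have := tendsto_nhds_unique (hlim (bary μ x)) h1
    exact congrFun this 0
  · intro ν' hcont' hmean' hinv'
    funext x
    have hconst : ∀ n, ν' ((bary μ)^[n] x) = ν' x := by
      intro n
      induction n with
      | zero => rfl
      | succ n ih => rw [Function.iterate_succ_apply', hinv', ih]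
    have h1 : Filter.Tendsto (fun n => ν' ((bary μ)^[n] x))
        Filter.atTop (nhds (ν x)) := by
      have := (hcont'.tendsto _).comp (hlim x)
      simpa [Function.comp_def, hmean' (ν x)] using this
    have h2 : Filter.Tendsto (fun n => ν' ((bary μ)^[n] x))
        Filter.atTop (nhds (ν' x)) := by
      simpa [hconst] using (tendsto_const_nhds : Filter.Tendsto (fun _ : ℕ => ν' x) _ _)
    exact tendsto_nhds_unique h2 h1
  · intro hs σ x
    have hiter : ∀ n, (bary μ)^[n] (x ∘ σ) = ((bary μ)^[n] x) ∘ σ := by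
      intro n
      induction n with
      | zero => rfl
      | succ n ih => rw [Function.iterate_succ_apply', ih, Function.iterate_succ_apply',
          bary_comp_perm hs]
    have hc : Continuous fun f : Fin (k+1) → X => f ∘ σ :=
      continuous_pi fun i => continuous_apply (σ i)
    have h1 : Filter.Tendsto (fun n => ((bary μ)^[n] x) ∘ σ)
        Filter.atTop (nhds fun _ => ν x) := by
      have := (hc.tendsto _).comp (hlim x)
      simpa [Function.comp_def] using this
    have h2 : Filter.Tendsto (fun n => ((bary μ)^[n] x) ∘ σ)
        Filter.atTop (nhds fun _ => ν (x ∘ σ)) := by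
      simpa [hiter] using hlim (x ∘ σ)
    have := tendsto_nhds_unique h2 h1
    exact congrFun this 0
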